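/- arXiv:2603.24305 — 6 statements merged into one kernel-verified Lean document; each statement's English description precedes it below -/
import Mathlib

section
/- A chordal graph G contains no induced minor isomorphic to 𝓗 if and only if for every two disjoint connected nonempty vertex sets A, B with no edge between them, every minimal A–B separator disjoint from A ∪ B is finite. -/
open SimpleGraph

variable {V W : Type*}

/-- `G` contains no induced cycle of length at least four. -/
def IsChordal (G : SimpleGraph V) : Prop :=
  ∀ (n : ℕ), 4 ≤ n → ∀ f : ZMod n → V, Function.Injective f →
    (∀ i j : ZMod n, G.Adj (f i) (f j) ↔ j = i + 1 ∨ i = j + 1) → False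

/-- The set of vertices outside `C` having a neighbour in `C`. -/
def nbhdSet (G : SimpleGraph V) (C : Set V) : Set V :=
  {v | v ∉ C ∧ ∃ u ∈ C, G.Adj u v}

/-- `C` is a connected component of `G - S`. -/
def IsCompOutside (G : SimpleGraph V) (S C : Set V) : Prop :=
  C.Nonempty ∧ Disjoint C S ∧ (G.induce C).Connected ∧
    ∀ u ∈ C, ∀ v, G.Adj u v → v ∉ S → v ∈ C

/-- A strict comb of cliques. -/
def HasStrictCombOfCliques (G : SimpleGraph V) : Prop :=
  ∃ v : ℕ → V, Function.Injective v ∧ (∀ i j, i ≠ j → G.Adj (v i) (v j)) ∧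
    ∀ i : ℕ, 0 < i → ∃ w, (∀ j, j < i → G.Adj w (v j)) ∧ (∀ j, i ≤ j → ¬ G.Adj w (v j))

/-- Every walk from `A` to `B` meets `S`. -/
def Separates (G : SimpleGraph V) (A B S : Set V) : Prop :=
  ∀ a ∈ A, ∀ b ∈ B, ∀ p : G.Walk a b, ∃ x ∈ p.support, x ∈ S

/-- `S` is a minimal `A`–`B` separator. -/
def IsMinimalSeparator (G : SimpleGraph V) (A B S : Set V) : Prop :=
  Separates G A B S ∧ ∀ S' ⊆ S, Separates G A B S' → S' = S

/-- `S` is a minimal `a`–`b` separator (containing neither `a` nor `b`). -/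
def IsMinimalVxSeparator (G : SimpleGraph V) (a b : V) (S : Set V) : Prop :=
  a ∉ S ∧ b ∉ S ∧ Separates G {a} {b} S ∧ ∀ S' ⊆ S, Separates G {a} {b} S' → S' = S

/-- A tree-decomposition of `G` with decomposition tree `T` and bags `bag`. -/
def IsTreeDecomp {ι : Type*} (G : SimpleGraph V) (T : SimpleGraph ι) (bag : ι → Set V) : Prop :=
  T.IsTree ∧ (∀ v, ∃ t, v ∈ bag t) ∧
    (∀ u v, G.Adj u v → ∃ t, u ∈ bag t ∧ v ∈ bag t) ∧
    ∀ v, (T.induce {t | v ∈ bag t}).Connected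

/-- `H` is an induced minor of `G`. -/
def IsInducedMinor (H : SimpleGraph W) (G : SimpleGraph V) : Prop :=
  ∃ B : W → Set V, (∀ w, (B w).Nonempty) ∧ (∀ w, (G.induce (B w)).Connected) ∧
    (Pairwise fun u w => Disjoint (B u) (B w)) ∧
    ∀ u w, u ≠ w → ((∃ x ∈ B u, ∃ y ∈ B w, G.Adj x y) ↔ H.Adj u w)

/-- The graph `𝓗`: a countably infinite clique together with two non-adjacent
dominating vertices. -/
def HGraph : SimpleGraph (ℕ ⊕ Bool) where
  Adj x y := match x, y with
    | .inl i, .inl j => i ≠ j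
    | .inl _, .inr _ => True
    | .inr _, .inl _ => True
    | .inr _, .inr _ => False
  symm := by
    constructor
    rintro (i | a) (j | b) h <;> simp_all
    exact fun h' => h h'.symm
  loopless := by
    constructor
    rintro (i | a) h <;> simp_all

/-- `u` lies on the path from `r` to `v` in the tree `T`; this is the tree-order. -/
def TreeLE (T : SimpleGraph V) (r u v : V) : Prop :=
  ∀ p : T.Walk r v, p.IsPath → u ∈ p.support

/-- `T` is a normal spanning tree of `G` with root `r`. -/
def IsNormalSpanningTree (G T : SimpleGraph V) (r : V) : Prop :=
  T ≤ G ∧ T.IsTree ∧ ∀ u v, G.Adj u v → TreeLE T r u v ∨ TreeLE T r v u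

universe u

section Helpers

open SimpleGraph Walk

universe v
variable {V' : Type v} {G : SimpleGraph V'}

private lemma walk_of_induce_walk {T : Set V'} {a b : ↥T} (w : (G.induce T).Walk a b) :
    ∃ p : G.Walk (a : V') (b : V'), ∀ x ∈ p.support, x ∈ T := by
  induction w with
  | nil => exact ⟨.nil, by simp⟩
  | @cons a c b h w ih =>
    obtain ⟨p, hp⟩ := ih
    refine ⟨.cons (by exact h) p, ?_⟩
    intro x hx
    rcases List.mem_cons.mp (hx : x ∈ (a : V') :: p.support) with h' | h'
    · subst h'; exact a.2
    · exact hp x h'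

private lemma reachable_induce_of_walk {T : Set V'} {u v : V'} (hu : u ∈ T) (hv : v ∈ T)
    (p : G.Walk u v) (hp : ∀ x ∈ p.support, x ∈ T) :
    (G.induce T).Reachable ⟨u, hu⟩ ⟨v, hv⟩ := by
  induction p with
  | nil => rfl
  | @cons a c b h q ih =>
    have hc : c ∈ T := hp c (by simp)
    have h1 : (G.induce T).Adj ⟨a, hu⟩ ⟨c, hc⟩ := by exact h
    exact (h1.reachable).trans (ih hc hv (fun x hx => hp x (by simp [hx])))

private lemma conn_exists_walk {T : Set V'} (h : (G.induce T).Connected) {u v : V'}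
    (hu : u ∈ T) (hv : v ∈ T) :
    ∃ p : G.Walk u v, ∀ x ∈ p.support, x ∈ T := by
  obtain ⟨w⟩ := h.preconnected ⟨u, hu⟩ ⟨v, hv⟩
  exact walk_of_induce_walk w

private lemma connected_of_walks {T : Set V'} (hne : T.Nonempty)
    (h : ∀ u ∈ T, ∀ v ∈ T, ∃ p : G.Walk u v, ∀ x ∈ p.support, x ∈ T) :
    (G.induce T).Connected := by
  obtain ⟨x, hx⟩ := hne
  haveI : Nonempty ↥T := ⟨⟨x, hx⟩⟩
  refine ⟨fun a b => ?_⟩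
  obtain ⟨p, hp⟩ := h a a.2 b b.2
  have := reachable_induce_of_walk a.2 b.2 p hp
  simpa using this

private lemma dropUntil_start : ∀ {x y : V'} [DecidableEq V'] (p : G.Walk x y)
    (h : x ∈ p.support), p.dropUntil x h = p
  | _, _, _, .nil, _ => rfl
  | _, _, _, .cons r q, _ => by simp [Walk.dropUntil]

private lemma mem_dropUntil_or [DecidableEq V'] : ∀ {x y : V'} (p : G.Walk x y) (u v : V')
    (hu : u ∈ p.support) (hv : v ∈ p.support),
    v ∈ (p.dropUntil u hu).support ∨ u ∈ (p.dropUntil v hv).support := by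
  intro x y p
  induction p with
  | nil =>
    intro u v hu hv
    rw [Walk.mem_support_nil_iff] at hu hv
    subst hu; subst hv
    exact Or.inl (Walk.start_mem_support _)
  | @cons a c b r q ih =>
    intro u v hu hv
    by_cases hua : a = u
    · subst hua
      rw [dropUntil_start]
      exact Or.inl hv
    · by_cases hva : a = v
      · subst hva
        rw [dropUntil_start]
        exact Or.inr hu
      · have hu' : u ∈ q.support := by
          rcases List.mem_cons.mp (by simpa using hu) with h | h
          · exact absurd h.symm hua
          · exact h
        have hv' : v ∈ q.support := by
          rcases List.mem_cons.mp (by simpa using hv) with h | h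
          · exact absurd h.symm hva
          · exact h
        rw [show (Walk.cons r q).dropUntil u hu = q.dropUntil u hu' by
              simp [Walk.dropUntil, hua],
            show (Walk.cons r q).dropUntil v hv = q.dropUntil v hv' by
              simp [Walk.dropUntil, hva]]
        exact ih u v hu' hv'

private lemma length_take_add_drop [DecidableEq V'] {x y u : V'} (p : G.Walk x y)
    (h : u ∈ p.support) :
    (p.takeUntil u h).length + (p.dropUntil u h).length = p.length := by
  conv_rhs => rw [← Walk.take_spec p h]
  rw [Walk.length_append]

private lemma edges_of_length_one : ∀ {u v : V'} (p : G.Walk u v), p.length = 1 →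
    p.edges = [s(u, v)]
  | _, _, .cons r .nil, _ => rfl
  | _, _, .cons r (.cons r' q), h => by simp [Walk.length_cons] at h

private lemma exists_chordless_path [DecidableEq V'] {T : Set V'} {s t : V'}
    (w : G.Walk s t) (hw : ∀ x ∈ w.support, x ∈ T) :
    ∃ p : G.Walk s t, p.IsPath ∧ (∀ x ∈ p.support, x ∈ T) ∧
      ∀ u v, u ∈ p.support → v ∈ p.support → G.Adj u v → s(u, v) ∈ p.edges := by
  classical
  set P : ℕ → Prop := fun n => ∃ p : G.Walk s t, p.length = n ∧ ∀ x ∈ p.support, x ∈ T with hP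
  have h0 : ∃ n, P n := ⟨w.length, w, rfl, hw⟩
  obtain ⟨q, hqlen, hqT⟩ := Nat.find_spec h0
  set p : G.Walk s t := q.bypass with hp
  have hpT : ∀ x ∈ p.support, x ∈ T := fun x hx => hqT x (q.support_bypass_subset hx)
  have hplen : p.length = Nat.find h0 := by
    have h1 : p.length ≤ Nat.find h0 := hqlen ▸ q.length_bypass_le
    have h2 : ¬ p.length < Nat.find h0 := fun hlt => Nat.find_min h0 hlt ⟨p, rfl, hpT⟩
    omega
  refine ⟨p, q.bypass_isPath, hpT, ?_⟩
  have key : ∀ u v (hu : u ∈ p.support) (hv : v ∈ p.support), G.Adj u v →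
      v ∈ (p.dropUntil u hu).support → s(u, v) ∈ p.edges := by
    intro u v hu hv hadj hvd
    set d := p.dropUntil u hu with hd
    have hcand : P ((p.takeUntil u hu).length + (1 + (d.dropUntil v hvd).length)) := by
      refine ⟨(p.takeUntil u hu).append (Walk.cons hadj (d.dropUntil v hvd)), ?_, ?_⟩
      · simp [Walk.length_append, Walk.length_cons]; omega
      · intro x hx
        rcases (Walk.mem_support_append_iff _ _).mp hx with h | h
        · exact hpT x (p.support_takeUntil_subset hu h)
        · rcases List.mem_cons.mp (by simpa using h) with h' | h'
          · subst h'; exact hpT x hu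
          · exact hpT x (p.support_dropUntil_subset hu
              (d.support_dropUntil_subset hvd h'))
    have hge : Nat.find h0 ≤ (p.takeUntil u hu).length + (1 + (d.dropUntil v hvd).length) :=
      Nat.find_min' h0 hcand
    have e1 : (p.takeUntil u hu).length + d.length = Nat.find h0 := by
      rw [length_take_add_drop p hu, hplen]
    have e2 : (d.takeUntil v hvd).length + (d.dropUntil v hvd).length = d.length :=
      length_take_add_drop d hvd
    have hle1 : (d.takeUntil v hvd).length ≤ 1 := by omega
    interval_cases hlen : (d.takeUntil v hvd).length
    · exact absurd (Walk.eq_of_length_eq_zero hlen) hadj.ne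
    · have := edges_of_length_one (d.takeUntil v hvd) hlen
      have hmem : s(u, v) ∈ (d.takeUntil v hvd).edges := by rw [this]; simp
      exact p.edges_dropUntil_subset hu (d.edges_takeUntil_subset hvd hmem)
  intro u v hu hv hadj
  rcases mem_dropUntil_or p u v hu hv with h | h
  · exact key u v hu hv hadj h
  · rw [Sym2.eq_swap]; exact key v u hv hu hadj.symm h

private lemma support_getElem : ∀ {x y : V'} (p : G.Walk x y) (i : ℕ)
    (h : i < p.support.length), p.support[i] = p.getVert i
  | _, _, .nil, 0, _ => rfl
  | _, _, .cons r q, 0, _ => rfl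
  | _, _, .cons r q, (i+1), h => by
      simpa [Walk.support_cons, Walk.getVert_cons_succ] using
        support_getElem q i (by simpa [Walk.support_cons] using h)

private lemma mem_edges_getVert : ∀ {x y u v : V'} (p : G.Walk x y), s(u, v) ∈ p.edges →
    ∃ l, l < p.length ∧ ((p.getVert l = u ∧ p.getVert (l+1) = v) ∨
      (p.getVert l = v ∧ p.getVert (l+1) = u)) := by
  intro x y u v p
  induction p with
  | nil => simp
  | @cons a c b r q ih =>
    intro h
    rcases (by simpa [Walk.edges_cons] using h :
        (u = a ∧ v = c ∨ u = c ∧ v = a) ∨ s(u, v) ∈ q.edges) with h2 | h'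
    · refine ⟨0, by simp, ?_⟩
      rcases h2 with ⟨h3, h4⟩ | ⟨h3, h4⟩
      · exact Or.inl ⟨by simp [h3.symm, Walk.getVert_zero],
          by simp [Walk.getVert_cons_succ, Walk.getVert_zero, h4.symm]⟩
      · exact Or.inr ⟨by simp [h4.symm, Walk.getVert_zero],
          by simp [Walk.getVert_cons_succ, Walk.getVert_zero, h3.symm]⟩
    · obtain ⟨l, hl, hor⟩ := ih h'
      exact ⟨l + 1, by simp [Walk.length_cons]; omega,
        by simpa [Walk.getVert_cons_succ] using hor⟩

private lemma cyc_getVert_inj {v : V'} (c : G.Walk v v) (hnd : c.support.tail.Nodup)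
    {i j : ℕ} (hi : i < c.length) (hj : j < c.length) (hg : c.getVert i = c.getVert j) :
    i = j := by
  have hsl : c.support.length = c.length + 1 := c.length_support
  have htl : c.support.tail.length = c.length := by
    rw [List.length_tail, hsl]; omega
  have tail_get : ∀ k : ℕ, (hk : k < c.length) → c.support.tail[k]'(by omega) =
      c.getVert (k+1) := by
    intro k hk
    rw [List.getElem_tail]
    exact support_getElem c (k+1) (by omega)
  have hvlast : c.getVert c.length = v := c.getVert_length
  rcases Nat.eq_zero_or_pos i with hi0 | hip
  · rcases Nat.eq_zero_or_pos j with hj0 | hjp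
    · omega
    · exfalso
      have h1 : c.support.tail[j-1]'(by omega) = c.getVert j := by
        have := tail_get (j-1) (by omega); rwa [Nat.sub_add_cancel hjp] at this
      have h2 : c.support.tail[c.length-1]'(by omega) = c.getVert c.length := by
        have := tail_get (c.length-1) (by omega)
        rwa [Nat.sub_add_cancel (by omega)] at this
      have : (j - 1 : ℕ) = c.length - 1 := by
        apply List.Nodup.getElem_inj_iff hnd |>.mp
        rw [h1, h2, hvlast, ← hg, hi0, c.getVert_zero]
      omega
  · rcases Nat.eq_zero_or_pos j with hj0 | hjp
    · exfalso
      have h1 : c.support.tail[i-1]'(by omega) = c.getVert i := by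
        have := tail_get (i-1) (by omega); rwa [Nat.sub_add_cancel hip] at this
      have h2 : c.support.tail[c.length-1]'(by omega) = c.getVert c.length := by
        have := tail_get (c.length-1) (by omega)
        rwa [Nat.sub_add_cancel (by omega)] at this
      have : (i - 1 : ℕ) = c.length - 1 := by
        apply List.Nodup.getElem_inj_iff hnd |>.mp
        rw [h1, h2, hvlast, hg, hj0, c.getVert_zero]
      omega
    · have h1 : c.support.tail[i-1]'(by omega) = c.getVert i := by
        have := tail_get (i-1) (by omega); rwa [Nat.sub_add_cancel hip] at this
      have h2 : c.support.tail[j-1]'(by omega) = c.getVert j := by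
        have := tail_get (j-1) (by omega); rwa [Nat.sub_add_cancel hjp] at this
      have : (i - 1 : ℕ) = j - 1 := by
        apply List.Nodup.getElem_inj_iff hnd |>.mp
        rw [h1, h2, hg]
      omega

private lemma chordal_contra (hch : IsChordal G) {v : V'} (c : G.Walk v v)
    (hnd : c.support.tail.Nodup) (hlen : 4 ≤ c.length)
    (hchord : ∀ u w, u ∈ c.support → w ∈ c.support → G.Adj u w → s(u, w) ∈ c.edges) :
    False := by
  set n := c.length with hn
  haveI : NeZero n := ⟨by omega⟩
  haveI : Fact (1 < n) := ⟨by omega⟩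
  set f : ZMod n → V' := fun i => c.getVert i.val with hf
  have hvadd : ∀ i : ZMod n, (i + 1).val = (i.val + 1) % n := by
    intro i
    rw [ZMod.val_add, ZMod.val_one]
  have hmem : ∀ i : ZMod n, f i ∈ c.support := by
    intro i
    have h1 : i.val < c.support.length := by
      rw [c.length_support]; exact (ZMod.val_lt i).trans_le (by omega)
    rw [hf]
    simp only
    rw [← support_getElem c i.val h1]
    exact List.getElem_mem h1
  have hinj : Function.Injective f := by
    intro i j hij
    have := cyc_getVert_inj c hnd (ZMod.val_lt i) (ZMod.val_lt j) hij
    exact ZMod.val_injective n this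
  have hsucc : ∀ i : ZMod n, G.Adj (f i) (f (i + 1)) := by
    intro i
    rw [hf]; simp only
    rw [hvadd i]
    rcases Nat.lt_or_ge (i.val + 1) n with hlt | hge
    · rw [Nat.mod_eq_of_lt hlt]
      exact c.adj_getVert_succ (by omega)
    · have hivl := ZMod.val_lt i
      have hival : i.val + 1 = n := by omega
      rw [hival, Nat.mod_self, c.getVert_zero]
      have h2 := c.adj_getVert_succ (i := c.length - 1) (by omega)
      rw [show c.length - 1 + 1 = c.length by omega, c.getVert_length] at h2
      convert h2 using 2
      omega
  apply hch n (by omega) f hinj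
  intro i j
  constructor
  · intro hadj
    have hedge := hchord _ _ (hmem i) (hmem j) hadj
    obtain ⟨l, hl, hor⟩ := mem_edges_getVert c hedge
    have hval : ∀ (a : ZMod n) (m : ℕ), m < n → c.getVert a.val = c.getVert m → a.val = m :=
      fun a m hm h => cyc_getVert_inj c hnd (ZMod.val_lt a) hm h
    have final : ∀ (a b : ZMod n), c.getVert a.val = c.getVert l →
        c.getVert b.val = c.getVert (l + 1) → b = a + 1 := by
      intro a b ha hb
      have hal : a.val = l := hval a l hl ha
      rcases Nat.lt_or_ge (l + 1) n with hlt | hge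
      · have hbl : b.val = l + 1 := hval b (l+1) hlt hb
        apply ZMod.val_injective
        rw [hvadd, hal, hbl, Nat.mod_eq_of_lt hlt]
      · have hl1 : l + 1 = n := by omega
        have hb0 : b.val = 0 := by
          apply hval b 0 (by omega)
          rw [hb, hl1, c.getVert_zero, hn, c.getVert_length]
        apply ZMod.val_injective
        rw [hvadd, hal, hb0, hl1, Nat.mod_self]
    rcases hor with ⟨h1, h2⟩ | ⟨h1, h2⟩
    · exact Or.inl (final i j h1.symm h2.symm)
    · exact Or.inr (final j i h1.symm h2.symm)
  · rintro (rfl | rfl)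
    · exact hsucc i
    · exact (hsucc j).symm

private lemma chain_inter {c : Set (Set V')} (hc : IsChain (· ⊆ ·) c) (hcne : c.Nonempty)
    (F : List V') (hmeet : ∀ s ∈ c, ∃ x ∈ F, x ∈ s) :
    ∃ x ∈ F, ∀ s ∈ c, x ∈ s := by
  classical
  set D : Set (Set V') := (fun s => {x | x ∈ F ∧ x ∈ s}) '' c with hD
  have hDfin : D.Finite := by
    apply Set.Finite.subset (F.finite_toSet.finite_subsets)
    rintro _ ⟨s, _, rfl⟩
    intro x hx
    exact hx.1
  have hDne : D.Nonempty := hcne.image _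
  obtain ⟨m, hmD, hmin'⟩ := Set.Finite.exists_minimalFor id D hDfin hDne
  have hmin : ∀ a' ∈ D, id a' ≤ id m → id a' = id m :=
    fun a' ha' h => le_antisymm h (hmin' ha' h)
  obtain ⟨s₀, hs₀, rfl⟩ := hmD
  obtain ⟨x, hxF, hxs₀⟩ := hmeet s₀ hs₀
  refine ⟨x, hxF, ?_⟩
  intro s hs
  rcases eq_or_ne s s₀ with rfl | hne
  · exact hxs₀
  rcases hc hs hs₀ hne with hsub | hsub
  · have h1 : {x | x ∈ F ∧ x ∈ s} ⊆ {x | x ∈ F ∧ x ∈ s₀} :=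
      fun y hy => ⟨hy.1, hsub hy.2⟩
    have h2 := hmin _ ⟨s, hs, rfl⟩ h1
    simp only [id] at h2
    have : x ∈ {x | x ∈ F ∧ x ∈ s} := by rw [Set.ext_iff] at h2; exact (h2 x).mpr ⟨hxF, hxs₀⟩
    exact this.2
  · exact hsub hxs₀

private lemma cross_lemma {A B : Set V'} (hAB : Disjoint A B)
    (hnoadj : ∀ a ∈ A, ∀ b ∈ B, ¬ G.Adj a b) :
    ∀ {a b : V'} (p : G.Walk a b), a ∈ A → b ∈ B → ∃ x ∈ p.support, x ∈ (A ∪ B)ᶜ := by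
  intro a b p
  induction p with
  | nil =>
    intro ha hb
    exact absurd (Set.disjoint_left.mp hAB ha) (not_not_intro hb)
  | @cons a z b h q ih =>
    intro ha hb
    by_cases hz : z ∈ (A ∪ B)ᶜ
    · exact ⟨z, by simp, hz⟩
    · rcases not_not.mp (fun hn => hz hn) with hzA | hzB
      · obtain ⟨x, hx, hx2⟩ := ih hzA hb
        exact ⟨x, by simp [hx], hx2⟩
      · exact absurd h (hnoadj a ha z hzB)

private lemma exit_nbr {C S : Set V'}
    (hclosed : ∀ v ∈ C, ∀ w, G.Adj v w → w ∉ S → w ∈ C) (s : V') :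
    ∀ {x b : V'} (p : G.Walk x b), x ∈ C → b ∉ C → (∀ y ∈ p.support, y ∈ S → y = s) →
      ∃ u ∈ C, G.Adj u s := by
  intro x b p
  induction p with
  | nil => intro hx hb _; exact absurd hx hb
  | @cons a z b h q ih =>
    intro hx hb hsupp
    by_cases hzS : z ∈ S
    · have : z = s := hsupp z (by simp) hzS
      exact ⟨a, hx, this ▸ h⟩
    · exact ih (hclosed a hx z h hzS) hb
        (fun y hy hyS => hsupp y (by simp [hy]) hyS)

end Helpers


theorem stmt9 {V : Type u} (G : SimpleGraph V) (hchordal : IsChordal G) :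
    ¬ IsInducedMinor HGraph G ↔
      ∀ A B : Set V, A.Nonempty → B.Nonempty →
        (G.induce A).Connected → (G.induce B).Connected →
        Disjoint A B → (∀ a ∈ A, ∀ b ∈ B, ¬ G.Adj a b) →
        ∀ S : Set V, IsMinimalSeparator G A B S → Disjoint S (A ∪ B) → S.Finite := by
  classical
  constructor
  · -- no induced minor → minimal separators finite
    intro hNoMinor A B hAne hBne hAconn hBconn hABdisj hnoadj S hSmin hSdisj
    by_contra hSfin
    have hSinf : S.Infinite := hSfin
    set CA : Set V := {v | v ∉ S ∧ ∃ a ∈ A, ∃ p : G.Walk a v, ∀ x ∈ p.support, x ∉ S}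
      with hCAdef
    set CB : Set V := {v | v ∉ S ∧ ∃ b ∈ B, ∃ p : G.Walk b v, ∀ x ∈ p.support, x ∉ S}
      with hCBdef
    have hAS : ∀ a ∈ A, a ∉ S := fun a ha hs =>
      Set.disjoint_left.mp hSdisj hs (Set.mem_union_left _ ha)
    have hBS : ∀ b ∈ B, b ∉ S := fun b hb hs =>
      Set.disjoint_left.mp hSdisj hs (Set.mem_union_right _ hb)
    have hACA : A ⊆ CA := by
      intro a ha
      refine ⟨hAS a ha, a, ha, Walk.nil, ?_⟩
      intro x hx
      simp only [Walk.support_nil, List.mem_singleton] at hx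
      rw [hx]; exact hAS a ha
    have hBCB : B ⊆ CB := by
      intro b hb
      refine ⟨hBS b hb, b, hb, Walk.nil, ?_⟩
      intro x hx
      simp only [Walk.support_nil, List.mem_singleton] at hx
      rw [hx]; exact hBS b hb
    have hCAS : ∀ v ∈ CA, v ∉ S := fun v hv => hv.1
    have hCBS : ∀ v ∈ CB, v ∉ S := fun v hv => hv.1
    have hCAclosed : ∀ v ∈ CA, ∀ w, G.Adj v w → w ∉ S → w ∈ CA := by
      rintro v ⟨hvS, a, ha, p, hp⟩ w hadj hwS
      refine ⟨hwS, a, ha, p.append (Walk.cons hadj Walk.nil), ?_⟩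
      intro x hx
      rcases (Walk.mem_support_append_iff _ _).mp hx with h | h
      · exact hp x h
      · simp only [Walk.support_cons, Walk.support_nil, List.mem_cons,
          List.mem_singleton] at h
        rcases h with rfl | rfl | h
        · exact hvS
        · exact hwS
        · exact absurd h List.not_mem_nil
    have hCBclosed : ∀ v ∈ CB, ∀ w, G.Adj v w → w ∉ S → w ∈ CB := by
      rintro v ⟨hvS, b, hb, p, hp⟩ w hadj hwS
      refine ⟨hwS, b, hb, p.append (Walk.cons hadj Walk.nil), ?_⟩
      intro x hx
      rcases (Walk.mem_support_append_iff _ _).mp hx with h | h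
      · exact hp x h
      · simp only [Walk.support_cons, Walk.support_nil, List.mem_cons,
          List.mem_singleton] at h
        rcases h with rfl | rfl | h
        · exact hvS
        · exact hwS
        · exact absurd h List.not_mem_nil
    have hjoin : ∀ v ∈ CA, ∀ w ∈ CB, ∀ r : G.Walk v w, (∀ x ∈ r.support, x ∉ S) → False := by
      rintro v ⟨hvS, a, ha, p, hp⟩ w ⟨hwS, b, hb, q, hq⟩ r hr
      obtain ⟨x, hx, hxS⟩ := hSmin.1 a ha b hb (p.append (r.append q.reverse))
      rcases (Walk.mem_support_append_iff _ _).mp hx with h | h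
      · exact hp x h hxS
      rcases (Walk.mem_support_append_iff _ _).mp h with h | h
      · exact hr x h hxS
      · exact hq x (by
          rw [Walk.support_reverse] at h
          exact List.mem_reverse.mp h) hxS
    have hcrossne : ∀ v ∈ CA, v ∉ CB := by
      intro v hv hv'
      exact hjoin v hv v hv' Walk.nil (by
        intro x hx
        simp only [Walk.support_nil, List.mem_singleton] at hx
        subst hx; exact hv.1)
    have hcrossadj : ∀ v ∈ CA, ∀ w ∈ CB, ¬ G.Adj v w := by
      intro v hv w hw hadj
      refine hjoin v hv w hw (Walk.cons hadj Walk.nil) ?_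
      intro x hx
      simp only [Walk.support_cons, Walk.support_nil, List.mem_cons,
        List.mem_singleton] at hx
      rcases hx with rfl | rfl | hx
      · exact hv.1
      · exact hw.1
      · exact absurd hx List.not_mem_nil
    have hsuppCA : ∀ {a v : V}, a ∈ A → ∀ (p : G.Walk a v), (∀ x ∈ p.support, x ∉ S) →
        ∀ x ∈ p.support, x ∈ CA := by
      intro a v ha p hp x hx
      exact ⟨hp x hx, a, ha, p.takeUntil x hx,
        fun y hy => hp y (p.support_takeUntil_subset hx hy)⟩
    have hsuppCB : ∀ {b v : V}, b ∈ B → ∀ (p : G.Walk b v), (∀ x ∈ p.support, x ∉ S) →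
        ∀ x ∈ p.support, x ∈ CB := by
      intro b v hb p hp x hx
      exact ⟨hp x hx, b, hb, p.takeUntil x hx,
        fun y hy => hp y (p.support_takeUntil_subset hx hy)⟩
    have hCAwalk : ∀ u ∈ CA, ∀ v ∈ CA, ∃ r : G.Walk u v, ∀ x ∈ r.support, x ∈ CA := by
      rintro u ⟨huS, au, hau, pu, hpu⟩ v ⟨hvS, av, hav, pv, hpv⟩
      obtain ⟨pA, hpA⟩ := conn_exists_walk hAconn hau hav
      refine ⟨pu.reverse.append (pA.append pv), ?_⟩
      intro x hx
      rcases (Walk.mem_support_append_iff _ _).mp hx with h | h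
      · exact hsuppCA hau pu hpu x (by
          rw [Walk.support_reverse] at h; exact List.mem_reverse.mp h)
      rcases (Walk.mem_support_append_iff _ _).mp h with h | h
      · exact hACA (hpA x h)
      · exact hsuppCA hav pv hpv x h
    have hCBwalk : ∀ u ∈ CB, ∀ v ∈ CB, ∃ r : G.Walk u v, ∀ x ∈ r.support, x ∈ CB := by
      rintro u ⟨huS, bu, hbu, pu, hpu⟩ v ⟨hvS, bv, hbv, pv, hpv⟩
      obtain ⟨pB, hpB⟩ := conn_exists_walk hBconn hbu hbv
      refine ⟨pu.reverse.append (pB.append pv), ?_⟩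
      intro x hx
      rcases (Walk.mem_support_append_iff _ _).mp hx with h | h
      · exact hsuppCB hbu pu hpu x (by
          rw [Walk.support_reverse] at h; exact List.mem_reverse.mp h)
      rcases (Walk.mem_support_append_iff _ _).mp h with h | h
      · exact hBCB (hpB x h)
      · exact hsuppCB hbv pv hpv x h
    have hCAne : CA.Nonempty := hAne.imp (fun a ha => hACA ha)
    have hCBne : CB.Nonempty := hBne.imp (fun b hb => hBCB hb)
    have hnbr : ∀ s ∈ S, (∃ u ∈ CA, G.Adj u s) ∧ (∃ u ∈ CB, G.Adj u s) := by
      intro s hs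
      have hnsep : ¬ Separates G A B (S \ {s}) := by
        intro hsep
        have heq := hSmin.2 (S \ {s}) Set.diff_subset hsep
        have : s ∈ S \ {s} := by rw [heq]; exact hs
        simp at this
      unfold Separates at hnsep
      push_neg at hnsep
      obtain ⟨a, ha, b, hb, p, hp⟩ := hnsep
      have hpS : ∀ y ∈ p.support, y ∈ S → y = s := by
        intro y hy hyS
        have h1 := hp y hy
        simp only [Set.mem_diff, Set.mem_singleton_iff, not_and, not_not] at h1
        exact h1 hyS
      constructor
      · exact exit_nbr hCAclosed s p (hACA ha)
          (fun hbCA => hcrossne b hbCA (hBCB hb)) hpS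
      · exact exit_nbr hCBclosed s p.reverse (hBCB hb)
          (fun haCB => hcrossne a (hACA ha) haCB)
          (fun y hy => hpS y (by
            rw [Walk.support_reverse] at hy; exact List.mem_reverse.mp hy))
    have hclq : ∀ s ∈ S, ∀ t ∈ S, s ≠ t → G.Adj s t := by
      intro s hs t ht hst
      by_contra hadj
      obtain ⟨⟨us, husC, husA⟩, ⟨vs, hvsC, hvsA⟩⟩ := hnbr s hs
      obtain ⟨⟨ut, hutC, hutA⟩, ⟨vt, hvtC, hvtA⟩⟩ := hnbr t ht
      obtain ⟨midA, hmidA⟩ := hCAwalk us husC ut hutC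
      obtain ⟨midB, hmidB⟩ := hCBwalk vs hvsC vt hvtC
      obtain ⟨ps, hpsPath, hpsT, hpsChord⟩ := exists_chordless_path
        (T := {x | x = s ∨ x = t ∨ x ∈ CA})
        (Walk.cons husA.symm (midA.append (Walk.cons hutA Walk.nil))) (by
          intro x hx
          rw [Walk.support_cons] at hx
          rcases List.mem_cons.mp hx with rfl | hx'
          · exact Or.inl rfl
          rcases (Walk.mem_support_append_iff _ _).mp hx' with h | h
          · exact Or.inr (Or.inr (hmidA x h))
          · simp only [Walk.support_cons, Walk.support_nil, List.mem_cons,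
              List.mem_singleton] at h
            rcases h with rfl | rfl | h
            · exact Or.inr (Or.inr hutC)
            · exact Or.inr (Or.inl rfl)
            · exact absurd h List.not_mem_nil)
      obtain ⟨qs, hqsPath, hqsT, hqsChord⟩ := exists_chordless_path
        (T := {x | x = s ∨ x = t ∨ x ∈ CB})
        (Walk.cons hvsA.symm (midB.append (Walk.cons hvtA Walk.nil))) (by
          intro x hx
          rw [Walk.support_cons] at hx
          rcases List.mem_cons.mp hx with rfl | hx'
          · exact Or.inl rfl
          rcases (Walk.mem_support_append_iff _ _).mp hx' with h | h
          · exact Or.inr (Or.inr (hmidB x h))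
          · simp only [Walk.support_cons, Walk.support_nil, List.mem_cons,
              List.mem_singleton] at h
            rcases h with rfl | rfl | h
            · exact Or.inr (Or.inr hvtC)
            · exact Or.inr (Or.inl rfl)
            · exact absurd h List.not_mem_nil)
      have hlen2 : ∀ (r : G.Walk s t), 2 ≤ r.length ∨ r.length = 0 ∨ r.length = 1 := by
        intro r; omega
      have hlenA : 2 ≤ ps.length := by
        rcases hlen2 ps with h | h | h
        · exact h
        · exact absurd (Walk.eq_of_length_eq_zero h) hst
        · exact absurd (Walk.adj_of_mem_edges ps
            (by rw [edges_of_length_one ps h]; simp)) hadj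
      have hlenB : 2 ≤ qs.length := by
        rcases hlen2 qs with h | h | h
        · exact h
        · exact absurd (Walk.eq_of_length_eq_zero h) hst
        · exact absurd (Walk.adj_of_mem_edges qs
            (by rw [edges_of_length_one qs h]; simp)) hadj
      set c : G.Walk s s := ps.append qs.reverse with hc
      have hclen : c.length = ps.length + qs.length := by
        rw [hc, Walk.length_append, Walk.length_reverse]
      -- membership facts
      have hsCA : s ∉ CA := fun h => hCAS s h hs
      have htCA : t ∉ CA := fun h => hCAS t h ht
      have hsCB : s ∉ CB := fun h => hCBS s h hs
      have htCB : t ∉ CB := fun h => hCBS t h ht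
      have hndA : (s :: ps.support.tail).Nodup := by
        rw [← ps.support_eq_cons]; exact hpsPath.support_nodup
      have hndB : (t :: qs.reverse.support.tail).Nodup := by
        rw [← qs.reverse.support_eq_cons]; exact hqsPath.reverse.support_nodup
      have hmemA : ∀ x ∈ ps.support.tail, x = t ∨ x ∈ CA := by
        intro x hx
        have hxs : x ≠ s := fun h => (List.nodup_cons.mp hndA).1 (h ▸ hx)
        rcases hpsT x (List.mem_of_mem_tail hx) with h | h | h
        · exact absurd h hxs
        · exact Or.inl h
        · exact Or.inr h
      have hmemB : ∀ x ∈ qs.reverse.support.tail, x = s ∨ x ∈ CB := by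
        intro x hx
        have hxt : x ≠ t := fun h => (List.nodup_cons.mp hndB).1 (h ▸ hx)
        have hxsup : x ∈ qs.support := by
          have : x ∈ qs.reverse.support := List.mem_of_mem_tail hx
          rw [Walk.support_reverse] at this; exact List.mem_reverse.mp this
        rcases hqsT x hxsup with h | h | h
        · exact Or.inl h
        · exact absurd h hxt
        · exact Or.inr h
      have hctail : c.support.tail = ps.support.tail ++ qs.reverse.support.tail := by
        rw [hc, Walk.support_append]
        conv_lhs => rw [ps.support_eq_cons]
        simp [List.cons_append]
      have hnd : c.support.tail.Nodup := by
        rw [hctail]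
        refine List.Nodup.append (List.nodup_cons.mp hndA).2 (List.nodup_cons.mp hndB).2 ?_
        intro x hx hx'
        rcases hmemA x hx with rfl | hxCA
        · rcases hmemB x hx' with h | h
          · exact hst h.symm
          · exact htCB h
        · rcases hmemB x hx' with rfl | h
          · exact hsCA hxCA
          · exact hcrossne x hxCA h
      have hcedges : ∀ e, e ∈ ps.edges ∨ e ∈ qs.edges → e ∈ c.edges := by
        intro e he
        rw [hc, Walk.edges_append]
        rcases he with h | h
        · exact List.mem_append_left _ h
        · exact List.mem_append_right _ (by
            rw [Walk.edges_reverse]; exact List.mem_reverse.mpr h)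
      have hsupp' : ∀ x ∈ c.support, x ∈ ps.support ∨ x ∈ qs.support := by
        intro x hx
        rw [hc] at hx
        rcases (Walk.mem_support_append_iff _ _).mp hx with h | h
        · exact Or.inl h
        · exact Or.inr (by rw [Walk.support_reverse] at h; exact List.mem_reverse.mp h)
      have hchordc : ∀ u w, u ∈ c.support → w ∈ c.support → G.Adj u w →
          s(u, w) ∈ c.edges := by
        intro u w hu hw huw
        have hu' := hsupp' u hu
        have hw' := hsupp' w hw
        by_cases hu1 : u ∈ ps.support <;> by_cases hw1 : w ∈ ps.support
        · exact hcedges _ (Or.inl (hpsChord u w hu1 hw1 huw))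
        · by_cases hu2 : u ∈ qs.support
          · exact hcedges _ (Or.inr (hqsChord u w hu2 (hw'.resolve_left hw1) huw))
          · exfalso
            have huCA : u ∈ CA := by
              rcases hpsT u hu1 with rfl | rfl | h
              · exact absurd qs.start_mem_support hu2
              · exact absurd qs.end_mem_support hu2
              · exact h
            have hwCB : w ∈ CB := by
              rcases hqsT w (hw'.resolve_left hw1) with rfl | rfl | h
              · exact absurd ps.start_mem_support hw1
              · exact absurd ps.end_mem_support hw1
              · exact h
            exact hcrossadj u huCA w hwCB huw
        · by_cases hw2 : w ∈ qs.support
          · exact hcedges _ (Or.inr (hqsChord u w (hu'.resolve_left hu1) hw2 huw))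
          · exfalso
            have hwCA : w ∈ CA := by
              rcases hpsT w hw1 with rfl | rfl | h
              · exact absurd qs.start_mem_support hw2
              · exact absurd qs.end_mem_support hw2
              · exact h
            have huCB : u ∈ CB := by
              rcases hqsT u (hu'.resolve_left hu1) with rfl | rfl | h
              · exact absurd ps.start_mem_support hu1
              · exact absurd ps.end_mem_support hu1
              · exact h
            exact hcrossadj w hwCA u huCB huw.symm
        · exact hcedges _ (Or.inr (hqsChord u w (hu'.resolve_left hu1)
            (hw'.resolve_left hw1) huw))
      exact chordal_contra hchordal c hnd (by omega) hchordc
    -- build the induced minor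
    set en : ℕ → V := fun i => ((Set.Infinite.natEmbedding S hSinf) i : V) with hen
    have henS : ∀ i, en i ∈ S := fun i => ((Set.Infinite.natEmbedding S hSinf) i).2
    have heninj : Function.Injective en := fun i j h =>
      (Set.Infinite.natEmbedding S hSinf).injective (Subtype.val_injective h)
    apply hNoMinor
    refine ⟨Sum.elim (fun i => {en i}) (fun b => cond b CB CA), ?_, ?_, ?_, ?_⟩
    · rintro (i | b)
      · exact ⟨en i, rfl⟩
      · cases b
        · exact hCAne
        · exact hCBne
    · rintro (i | b)
      · refine connected_of_walks ⟨en i, rfl⟩ ?_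
        intro u hu v hv
        simp only [Sum.elim_inl, Set.mem_singleton_iff] at hu hv
        subst hu; subst hv
        exact ⟨Walk.nil, by
          intro x hx
          simp only [Walk.support_nil, List.mem_singleton] at hx
          subst hx; rfl⟩
      · cases b
        · exact connected_of_walks hCAne hCAwalk
        · exact connected_of_walks hCBne hCBwalk
    · rintro (i | b) (j | b') hne
      · have hij : i ≠ j := fun h => hne (by rw [h])
        simp only [Sum.elim_inl]
        exact Set.disjoint_singleton.mpr (fun h => hij (heninj h))
      · cases b' <;>
        · simp only [Sum.elim_inl, Sum.elim_inr]
          refine Set.disjoint_left.mpr ?_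
          intro x hx
          simp only [Set.mem_singleton_iff] at hx
          subst hx
          first
          | exact fun h => hCAS (en i) h (henS i)
          | exact fun h => hCBS (en i) h (henS i)
      · cases b <;>
        · simp only [Sum.elim_inl, Sum.elim_inr]
          refine Set.disjoint_right.mpr ?_
          intro x hx
          simp only [Set.mem_singleton_iff] at hx
          subst hx
          first
          | exact fun h => hCAS (en j) h (henS j)
          | exact fun h => hCBS (en j) h (henS j)
      · cases b <;> cases b'
        · exact absurd rfl hne
        · exact Set.disjoint_left.mpr (fun x hx hx' => hcrossne x hx hx')
        · exact Set.disjoint_right.mpr (fun x hx hx' => hcrossne x hx hx')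
        · exact absurd rfl hne
    · rintro (i | b) (j | b') hne
      · have hij : i ≠ j := fun h => hne (by rw [h])
        constructor
        · intro _
          exact hij
        · intro _
          exact ⟨en i, rfl, en j, rfl,
            hclq (en i) (henS i) (en j) (henS j) (fun h => hij (heninj h))⟩
      · cases b'
        · constructor
          · intro _; trivial
          · intro _
            obtain ⟨u, hu, hadj⟩ := (hnbr (en i) (henS i)).1
            exact ⟨en i, rfl, u, hu, hadj.symm⟩
        · constructor
          · intro _; trivial
          · intro _
            obtain ⟨u, hu, hadj⟩ := (hnbr (en i) (henS i)).2
            exact ⟨en i, rfl, u, hu, hadj.symm⟩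
      · cases b
        · constructor
          · intro _; trivial
          · intro _
            obtain ⟨u, hu, hadj⟩ := (hnbr (en j) (henS j)).1
            exact ⟨u, hu, en j, rfl, hadj⟩
        · constructor
          · intro _; trivial
          · intro _
            obtain ⟨u, hu, hadj⟩ := (hnbr (en j) (henS j)).2
            exact ⟨u, hu, en j, rfl, hadj⟩
      · cases b <;> cases b'
        · exact absurd rfl hne
        · constructor
          · rintro ⟨x, hx, y, hy, hadj⟩
            exact absurd hadj (hcrossadj x hx y hy)
          · intro h
            exact absurd h (by simp [HGraph])
        · constructor
          · rintro ⟨x, hx, y, hy, hadj⟩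
            exact absurd hadj.symm (hcrossadj y hy x hx)
          · intro h
            exact absurd h (by simp [HGraph])
        · exact absurd rfl hne
  · -- minimal separators finite → no induced minor
    intro hrhs hm
    obtain ⟨Bs, hBsNe, hBsConn, hBsDisj, hBsIff⟩ := hm
    set A : Set V := Bs (.inr false) with hA
    set B : Set V := Bs (.inr true) with hB
    have hABne : (Sum.inr false : ℕ ⊕ Bool) ≠ (Sum.inr true) := by simp
    have hABdisj : Disjoint A B := hBsDisj hABne
    have hnoadj : ∀ a ∈ A, ∀ b ∈ B, ¬ G.Adj a b := by
      intro a ha b hb hadj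
      have := (hBsIff _ _ hABne).mp ⟨a, ha, b, hb, hadj⟩
      exact (by simp [HGraph] : ¬ HGraph.Adj (.inr false) (.inr true)) this
    have hsep0 : Separates G A B (A ∪ B)ᶜ := by
      intro a ha b hb p
      exact cross_lemma hABdisj hnoadj p ha hb
    -- Zorn's lemma to get a minimal separator
    set F : Set (Set V) := {T | T ⊆ (A ∪ B)ᶜ ∧ Separates G A B T} with hF
    obtain ⟨M, hMsub, hMmin⟩ := zorn_superset_nonempty F (by
      intro ch hchF hchain hchne
      refine ⟨⋂₀ ch, ⟨?_, ?_⟩, fun s hs => Set.sInter_subset_of_mem hs⟩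
      · obtain ⟨s₀, hs₀⟩ := hchne
        exact (Set.sInter_subset_of_mem hs₀).trans (hchF hs₀).1
      · intro a ha b hb p
        obtain ⟨x, hxF, hxall⟩ := chain_inter hchain hchne p.support
          (fun s hsch => (hchF hsch).2 a ha b hb p)
        exact ⟨x, hxF, Set.mem_sInter.mpr hxall⟩) _ ⟨subset_rfl, hsep0⟩
    have hMmem : M ⊆ (A ∪ B)ᶜ ∧ Separates G A B M := hMmin.1
    have hMminsep : IsMinimalSeparator G A B M := by
      refine ⟨hMmem.2, ?_⟩
      intro S' hS' hsepS'
      exact subset_antisymm hS' (hMmin.2 ⟨hS'.trans hMmem.1, hsepS'⟩ hS')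
    have hMdisj : Disjoint M (A ∪ B) := by
      refine Set.disjoint_left.mpr ?_
      intro x hx
      exact hMmem.1 hx
    have hMfin : M.Finite := hrhs A B (hBsNe _) (hBsNe _) (hBsConn _) (hBsConn _)
      hABdisj hnoadj M hMminsep hMdisj
    -- find a clique branch set missing M
    have hmiss : ∃ i : ℕ, ∀ x ∈ Bs (.inl i), x ∉ M := by
      by_contra hcon
      push_neg at hcon
      choose g hg1 hg2 using hcon
      have hginj : Function.Injective g := by
        intro i j hij
        by_contra hne
        have hd := hBsDisj (show (Sum.inl i : ℕ ⊕ Bool) ≠ Sum.inl j by simp [hne])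
        exact Set.disjoint_left.mp hd (hg1 i) (hij ▸ hg1 j)
      exact (Set.infinite_of_injective_forall_mem hginj hg2) hMfin
    obtain ⟨i, hi⟩ := hmiss
    have hADne : (Sum.inr false : ℕ ⊕ Bool) ≠ Sum.inl i := by simp
    have hDBne : (Sum.inl i : ℕ ⊕ Bool) ≠ Sum.inr true := by simp
    obtain ⟨a, ha, x1, hx1, hadj1⟩ := (hBsIff _ _ hADne).mpr (by simp [HGraph])
    obtain ⟨x2, hx2, b, hb, hadj2⟩ := (hBsIff _ _ hDBne).mpr (by simp [HGraph])
    obtain ⟨mid, hmid⟩ := conn_exists_walk (hBsConn (.inl i)) hx1 hx2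
    obtain ⟨x, hx, hxM⟩ := hMmem.2 a ha b hb
      (Walk.cons hadj1 (mid.append (Walk.cons hadj2 Walk.nil)))
    rw [Walk.support_cons] at hx
    rcases List.mem_cons.mp hx with rfl | hx'
    · exact Set.disjoint_left.mp hMdisj hxM (Set.mem_union_left _ ha)
    rcases (Walk.mem_support_append_iff _ _).mp hx' with h | h
    · exact hi x (hmid x h) hxM
    · simp only [Walk.support_cons, Walk.support_nil, List.mem_cons,
        List.mem_singleton] at h
      rcases h with rfl | rfl | h
      · exact hi x hx2 hxM
      · exact Set.disjoint_left.mp hMdisj hxM (Set.mem_union_right _ hb)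
      · exact absurd h List.not_mem_nil
end

section
/- The graph 𝓗, obtained from a countably infinite clique by adding two non-adjacent vertices each adjacent to all clique vertices, admits no tree-decomposition all of whose parts are finite cliques. -/
open SimpleGraph

variable {V W : Type*}

private lemma walkInSet {ι : Type*} {T : SimpleGraph ι} {A : Set ι}
    (hA : (T.induce A).Connected) {u v : ι} (hu : u ∈ A) (hv : v ∈ A) :
    ∃ p : T.Walk u v, ∀ x ∈ p.support, x ∈ A := by
  obtain ⟨w⟩ := hA.preconnected ⟨u, hu⟩ ⟨v, hv⟩
  refine ⟨w.map (Embedding.induce A).toHom, ?_⟩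
  intro x hx
  replace hx : x ∈ (w.map (Embedding.induce A).toHom).support := hx
  rw [SimpleGraph.Walk.support_map] at hx
  obtain ⟨y, hy, rfl⟩ := List.mem_map.1 hx
  exact y.2

private lemma transEdge {ι : Type*} {T : SimpleGraph ι} {A : Set ι} :
    ∀ {x y : ι} (p : T.Walk x y), p.IsPath → x ∈ A → y ∉ A →
      ∃ s s', T.Adj s s' ∧ s ∈ A ∧ s' ∉ A ∧ ∃ q : T.Walk s' y, s ∉ q.support := by
  intro x y p
  induction p with
  | nil => exact fun _ hx hy => absurd hx hy
  | @cons u m y h p ih =>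
    intro hp hx hy
    by_cases hm : m ∈ A
    · exact ih hp.of_cons hm hy
    · refine ⟨u, m, h, hx, hm, p, ?_⟩
      rw [SimpleGraph.Walk.cons_isPath_iff] at hp
      exact hp.2

private lemma avoidReach {ι : Type*} {T : SimpleGraph ι} {s s' u v : ι} (w : T.Walk u v)
    (h : s ∉ w.support ∨ s' ∉ w.support) :
    (T.deleteEdges {s(s, s')}).Reachable u v := by
  refine ⟨w.toDeleteEdges _ ?_⟩
  intro e he hes
  rw [Set.mem_singleton_iff] at hes
  subst hes
  rcases h with h | h
  · exact h (w.fst_mem_support_of_mem_edges he)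
  · exact h (w.snd_mem_support_of_mem_edges he)

universe u

theorem stmt10 {ι : Type u} (T : SimpleGraph ι) (bag : ι → Set (ℕ ⊕ Bool))
    (htd : IsTreeDecomp HGraph T bag) :
    ¬ ∀ t, (bag t).Finite ∧ HGraph.IsClique (bag t) := by
  classical
  intro h
  obtain ⟨htree, hcov, hedge, hconn⟩ := htd
  set a : ℕ ⊕ Bool := Sum.inr false with ha
  set b : ℕ ⊕ Bool := Sum.inr true with hb
  have hab : ∀ t, a ∈ bag t → b ∈ bag t → False := by
    intro t h1 h2
    exact (h t).2 h1 h2 (by simp [ha, hb])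
  obtain ⟨ta, hta⟩ := hcov a
  obtain ⟨tb, htb⟩ := hcov b
  obtain ⟨w0⟩ := htree.isConnected.preconnected ta tb
  obtain ⟨s, s', hadj, hsA, hs'A, q, hq⟩ :=
    transEdge (A := {t | a ∈ bag t}) w0.toPath.1 w0.toPath.2 hta (fun hc => hab tb hc htb)
  have hbridge : ¬ (T.deleteEdges {s(s, s')}).Reachable s s' := by
    have := (isAcyclic_iff_forall_edge_isBridge.mp htree.IsAcyclic) (e := s(s, s'))
      (by rwa [SimpleGraph.mem_edgeSet])
    exact SimpleGraph.isBridge_iff.mp this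
  have key : ∀ i : ℕ, Sum.inl i ∈ bag s := by
    intro i
    by_contra hi
    obtain ⟨t1, ht1a, ht1i⟩ := hedge a (Sum.inl i) trivial
    obtain ⟨t2, ht2b, ht2i⟩ := hedge b (Sum.inl i) trivial
    obtain ⟨w1, hw1⟩ := walkInSet (hconn (Sum.inl i)) ht1i ht2i
    obtain ⟨w2, hw2⟩ := walkInSet (hconn a) ht1a hsA
    obtain ⟨w3, hw3⟩ := walkInSet (hconn b) ht2b htb
    have r1 : (T.deleteEdges {s(s, s')}).Reachable t1 t2 :=
      avoidReach w1 (Or.inl fun hc => hi (hw1 s hc))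
    have r2 : (T.deleteEdges {s(s, s')}).Reachable t1 s :=
      avoidReach w2 (Or.inr fun hc => hs'A (hw2 s' hc))
    have r3 : (T.deleteEdges {s(s, s')}).Reachable t2 tb :=
      avoidReach w3 (Or.inl fun hc => hab s hsA (hw3 s hc))
    have r4 : (T.deleteEdges {s(s, s')}).Reachable s' tb :=
      avoidReach q (Or.inl hq)
    exact hbridge (r2.symm.trans (r1.trans (r3.trans r4.symm)))
  exact Set.infinite_of_injective_forall_mem Sum.inl_injective key (h s).1
end

section
/- If a graph G admits a tree-decomposition into finite cliques and H is an induced minor of G, then H also admits a tree-decomposition into finite cliques. -/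
open SimpleGraph

variable {V W : Type*}

universe u v
section

variable {V : Type u} {W : Type*} {ι : Type v} (G : SimpleGraph V)

private lemma sameVxReach {T : SimpleGraph ι} {bag : ι → Set V}
    (htd : IsTreeDecomp G T bag) (x : V) {A : Set ι}
    (hsub : {t | x ∈ bag t} ⊆ A) {t₁ t₂ : ι} (h₁ : x ∈ bag t₁) (h₂ : x ∈ bag t₂)
    (m₁ : t₁ ∈ A) (m₂ : t₂ ∈ A) :
    (T.induce A).Reachable ⟨t₁, m₁⟩ ⟨t₂, m₂⟩ := by
  have hc := htd.2.2.2 x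
  have hr : (T.induce {t | x ∈ bag t}).Reachable ⟨t₁, h₁⟩ ⟨t₂, h₂⟩ := hc.preconnected _ _
  have := hr.map (T.induceHomOfLE hsub).toHom
  exact this

end

theorem stmt11 {V : Type u} {W : Type*} {ι : Type v} (G : SimpleGraph V)
    (H : SimpleGraph W) (T : SimpleGraph ι) (bag : ι → Set V)
    (htd : IsTreeDecomp G T bag)
    (hfin : ∀ t, (bag t).Finite ∧ G.IsClique (bag t))
    (hminor : IsInducedMinor H G) :
    ∃ (κ : Type v) (T' : SimpleGraph κ) (bag' : κ → Set W),
      IsTreeDecomp H T' bag' ∧ ∀ t, (bag' t).Finite ∧ H.IsClique (bag' t) := by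
  classical
  obtain ⟨B, hne, hconn, hdisj, hadj⟩ := hminor
  refine ⟨ι, T, fun t => {w | ∃ x ∈ B w, x ∈ bag t}, ⟨htd.1, ?_, ?_, ?_⟩, ?_⟩
  · -- coverage
    intro w
    obtain ⟨x, hx⟩ := hne w
    obtain ⟨t, ht⟩ := htd.2.1 x
    exact ⟨t, x, hx, ht⟩
  · -- edges
    intro u w huw
    rcases huw.ne with hne'
    obtain ⟨x, hxB, y, hyB, hxy⟩ := (hadj u w hne').2 huw
    obtain ⟨t, hxt, hyt⟩ := htd.2.2.1 x y hxy
    exact ⟨t, ⟨x, hxB, hxt⟩, ⟨y, hyB, hyt⟩⟩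
  · -- connectivity of {t | w ∈ bag' t}
    intro w
    set S : Set ι := {t | ∃ x ∈ B w, x ∈ bag t} with hS
    have hsub : ∀ x ∈ B w, {t | x ∈ bag t} ⊆ S := fun x hx t ht => ⟨x, hx, ht⟩
    have key : ∀ {a b : ↥(B w)} (p : (G.induce (B w)).Walk a b) {t₁ t₂ : ι}
        (h₁ : (a : V) ∈ bag t₁) (h₂ : (b : V) ∈ bag t₂)
        (m₁ : t₁ ∈ S) (m₂ : t₂ ∈ S),
        (T.induce S).Reachable ⟨t₁, m₁⟩ ⟨t₂, m₂⟩ := by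
      intro a b p
      induction p with
      | @nil u =>
        intro t₁ t₂ h₁ h₂ m₁ m₂
        exact sameVxReach G htd _ (hsub _ u.2) h₁ h₂ m₁ m₂
      | @cons a c b hac p ih =>
        intro t₁ t₂ h₁ h₂ m₁ m₂
        have hG : G.Adj (a : V) (c : V) := hac
        obtain ⟨t, hat, hct⟩ := htd.2.2.1 _ _ hG
        have mt : t ∈ S := ⟨a, a.2, hat⟩
        exact (sameVxReach G htd _ (hsub _ a.2) h₁ hat m₁ mt).trans
          (ih hct h₂ mt m₂)
    show (T.induce S).Connected
    haveI hnem : Nonempty ↥S := by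
      obtain ⟨x, hx⟩ := hne w
      obtain ⟨t, ht⟩ := htd.2.1 x
      exact ⟨⟨t, x, hx, ht⟩⟩
    refine ⟨?_⟩
    rintro ⟨t₁, x, hxB, hxt⟩ ⟨t₂, y, hyB, hyt⟩
    obtain ⟨p⟩ := (hconn w).preconnected ⟨x, hxB⟩ ⟨y, hyB⟩
    exact key p hxt hyt ⟨x, hxB, hxt⟩ ⟨y, hyB, hyt⟩
  · -- finite cliques
    intro t
    constructor
    · haveI : Finite ↥(bag t) := (hfin t).1.to_subtype
      rw [← Set.finite_coe_iff]
      choose g hg1 hg2 using fun (w : {w | ∃ x ∈ B w, x ∈ bag t}) => w.2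
      refine Finite.of_injective (fun w => (⟨g w, hg2 w⟩ : ↥(bag t))) fun w₁ w₂ hfw => ?_
      have hx : g w₁ = g w₂ := Subtype.mk_eq_mk.mp hfw
      by_contra hne'
      have hne'' : (w₁ : W) ≠ (w₂ : W) := fun h => hne' (Subtype.ext h)
      exact (hdisj hne'').le_bot ⟨hg1 w₁, hx ▸ hg1 w₂⟩
    · rintro u ⟨x, hxB, hxt⟩ w ⟨y, hyB, hyt⟩ huw
      have hxy : x ≠ y := fun h => (hdisj huw).le_bot ⟨hxB, h ▸ hyB⟩
      exact (hadj u w huw).1 ⟨x, hxB, y, hyB, (hfin t).2 hxt hyt hxy⟩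
end

section
/- Let G be a graph in which, for every pair of non-adjacent vertices a, b, every minimal a–b separator is finite. Then for every pair of non-adjacent vertices a, b of G, the collection of all minimal a–b separators is finite. -/
open SimpleGraph

variable {V W : Type*}

universe u

/-- The intersection of a nonempty chain of `{a}`–`{b}` separators separates. -/
lemma chain_sInter_separates {V : Type u} (G : SimpleGraph V) (a b : V)
    (c : Set (Set V)) (hc : IsChain (· ⊆ ·) c) (hne : c.Nonempty)
    (hsep : ∀ s ∈ c, Separates G {a} {b} s) :
    Separates G {a} {b} (⋂₀ c) := by
  classical
  intro a' ha' b' hb' p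
  set tr : Set V → Finset V := fun s => p.support.toFinset.filter (· ∈ s) with htr
  have htrfin : (tr '' c).Finite := by
    apply (p.support.toFinset.powerset.finite_toSet).subset
    rintro _ ⟨s, -, rfl⟩
    exact Finset.mem_coe.mpr (Finset.mem_powerset.mpr (Finset.filter_subset _ _))
  obtain ⟨t0, ht0, hmin⟩ := Set.exists_min_image (tr '' c) Finset.card htrfin (hne.image tr)
  obtain ⟨s0, hs0c, rfl⟩ := ht0
  obtain ⟨x, hxs, hxS⟩ := hsep s0 hs0c a' ha' b' hb' p
  have hxtr : x ∈ tr s0 := by simp [tr, hxs, hxS]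
  refine ⟨x, hxs, ?_⟩
  rw [Set.mem_sInter]
  intro s hs
  rcases eq_or_ne s s0 with rfl | hss0
  · exact hxS
  · rcases hc hs0c hs hss0.symm with h | h
    · exact h hxS
    · have hsub : tr s ⊆ tr s0 := by
        intro y hy
        simp only [tr, Finset.mem_filter] at hy ⊢
        exact ⟨hy.1, h hy.2⟩
      have : tr s = tr s0 :=
        Finset.eq_of_subset_of_card_le hsub (hmin _ ⟨s, hs, rfl⟩)
      have hx' : x ∈ tr s := this ▸ hxtr
      simpa [tr] using (Finset.mem_filter.mp hx').2

theorem stmt15 {V : Type u} (G : SimpleGraph V)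
    (hfin : ∀ a b : V, a ≠ b → ¬ G.Adj a b →
      ∀ S : Set V, IsMinimalVxSeparator G a b S → S.Finite) :
    ∀ a b : V, a ≠ b → ¬ G.Adj a b →
      {S : Set V | IsMinimalVxSeparator G a b S}.Finite := by
  classical
  intro a b hab hadj
  by_contra hinf
  have hinf' : {S : Set V | IsMinimalVxSeparator G a b S}.Infinite := hinf
  obtain f := hinf'.natEmbedding
  set 𝒰 : Ultrafilter ℕ := Filter.hyperfilter ℕ with h𝒰
  set Sinf : Set V := {v | {i | v ∈ (f i : Set V)} ∈ 𝒰} with hSinf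
  have hsepf : ∀ i : ℕ, Separates G {a} {b} (f i : Set V) := fun i => (f i).2.2.2.1
  -- `Sinf` separates
  have hsep : Separates G {a} {b} Sinf := by
    intro a' ha' b' hb' p
    choose g hg1 hg2 using fun i => hsepf i a' ha' b' hb' p
    have hsupp : {x | x ∈ p.support}.Finite := p.support.finite_toSet
    have hunion : (⋃ x ∈ {x | x ∈ p.support}, {i | g i = x}) ∈ 𝒰 := by
      have : (⋃ x ∈ {x | x ∈ p.support}, {i | g i = x}) = Set.univ := by
        ext i; simp only [Set.mem_iUnion, Set.mem_univ, iff_true]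
        exact ⟨g i, hg1 i, rfl⟩
      rw [this]; exact Filter.univ_mem
    obtain ⟨x, hx, hxmem⟩ := (Ultrafilter.finite_biUnion_mem_iff hsupp).mp hunion
    refine ⟨x, hx, ?_⟩
    exact 𝒰.toFilter.mem_of_superset hxmem (fun i hi => hi ▸ hg2 i)
  have haS : a ∉ Sinf := by
    have : {i | a ∈ (f i : Set V)} = ∅ := by
      ext i; simp only [Set.mem_setOf_eq, Set.mem_empty_iff_false, iff_false]
      exact (f i).2.1
    simp only [hSinf, Set.mem_setOf_eq, this]
    exact Filter.empty_notMem (𝒰 : Filter ℕ)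
  have hbS : b ∉ Sinf := by
    have : {i | b ∈ (f i : Set V)} = ∅ := by
      ext i; simp only [Set.mem_setOf_eq, Set.mem_empty_iff_false, iff_false]
      exact (f i).2.2.1
    simp only [hSinf, Set.mem_setOf_eq, this]
    exact Filter.empty_notMem (𝒰 : Filter ℕ)
  -- Zorn: a minimal separator inside `Sinf`
  set 𝒞 : Set (Set V) := {S | S ⊆ Sinf ∧ Separates G {a} {b} S} with h𝒞
  have hzorn : ∃ m ⊆ Sinf, Minimal (· ∈ 𝒞) m := by
    apply zorn_superset_nonempty
    · intro c hc hchain hcne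
      refine ⟨⋂₀ c, ⟨?_, chain_sInter_separates G a b c hchain hcne
        (fun s hs => (hc hs).2)⟩, fun s hs => Set.sInter_subset_of_mem hs⟩
      obtain ⟨s, hs⟩ := hcne
      exact (Set.sInter_subset_of_mem hs).trans (hc hs).1
    · exact ⟨Set.Subset.rfl, hsep⟩
  obtain ⟨m, hmS, hmem, hminimal⟩ := hzorn
  have hm : IsMinimalVxSeparator G a b m := by
    refine ⟨fun h => haS (hmem.1 h), fun h => hbS (hmem.1 h), hmem.2, ?_⟩
    intro S' hS' hsepS'
    exact Set.Subset.antisymm hS' (hminimal ⟨hS'.trans hmem.1, hsepS'⟩ hS')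
  have hmfin : m.Finite := hfin a b hab hadj m hm
  -- the set of indices whose separator contains `m`
  have hA : {i | m ⊆ (f i : Set V)} ∈ 𝒰 := by
    have : (⋂ v ∈ m, {i | v ∈ (f i : Set V)}) ∈ 𝒰.toFilter :=
      (Filter.biInter_mem hmfin).mpr (fun v hv => hmem.1 hv)
    refine Filter.mem_of_superset this ?_
    intro i hi
    simp only [Set.mem_iInter] at hi
    exact fun v hv => hi v hv
  have hAinf : {i | m ⊆ (f i : Set V)}.Infinite := by
    intro hAfin
    exact Filter.notMem_hyperfilter_of_finite hAfin hA
  have hkey : ∀ i ∈ {i | m ⊆ (f i : Set V)}, (f i : Set V) = m :=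
    fun i hi => ((f i).2.2.2.2 m hi hm.2.2.1).symm
  obtain ⟨i, hi⟩ := hAinf.nonempty
  obtain ⟨j, hj⟩ := (hAinf.diff (Set.finite_singleton i)).nonempty
  rw [Set.mem_diff] at hj
  have hij : f i = f j := Subtype.ext ((hkey i hi).trans (hkey j hj.1).symm)
  exact hj.2 (Set.mem_singleton_iff.mpr (f.injective hij).symm)
end

section
/- Let G be a chordal graph, S a clique separator of G, and let C_A, C_B be two distinct components of G − S each attached to S (i.e., S ⊆ N(C_A) and S ⊆ N(C_B)). If S is infinite, then G contains an induced minor isomorphic to 𝓗. -/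
open SimpleGraph

variable {V W : Type*}

universe u

lemma comp_subset_of_mem {V : Type u} {G : SimpleGraph V} {S CA CB : Set V}
    (hCA : IsCompOutside G S CA) (hCB : IsCompOutside G S CB)
    {x : V} (hxA : x ∈ CA) (hxB : x ∈ CB) : CA ⊆ CB := by
  intro u hu
  have key : ∀ {a b : CA} (_ : (G.induce CA).Walk a b), (a : V) ∈ CB → (b : V) ∈ CB := by
    intro a b p
    induction p with
    | nil => exact id
    | @cons a c b h p ih =>
      intro ha
      refine ih (hCB.2.2.2 _ ha _ h ?_)
      exact fun hs => Set.disjoint_left.mp hCA.2.1 c.2 hs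
  obtain ⟨w⟩ := hCA.2.2.1.preconnected ⟨x, hxA⟩ ⟨u, hu⟩
  exact key w hxB


theorem stmt18 {V : Type u} (G : SimpleGraph V) (hchordal : IsChordal G)
    (S : Set V) (hS : G.IsClique S)
    (CA CB : Set V) (hCA : IsCompOutside G S CA) (hCB : IsCompOutside G S CB)
    (hne : CA ≠ CB) (hattA : S ⊆ nbhdSet G CA) (hattB : S ⊆ nbhdSet G CB)
    (hinf : S.Infinite) :
    IsInducedMinor HGraph G := by
  classical
  -- chordality not needed
  have hAB : Disjoint CA CB := by
    rw [Set.disjoint_left]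
    intro x hxA hxB
    exact hne (Set.Subset.antisymm (comp_subset_of_mem hCA hCB hxA hxB)
      (comp_subset_of_mem hCB hCA hxB hxA))
  set f : ℕ → V := fun i => ((hinf.natEmbedding) i : V) with hf
  have hfS : ∀ i, f i ∈ S := fun i => ((hinf.natEmbedding) i).2
  have hfinj : Function.Injective f :=
    Subtype.val_injective.comp (hinf.natEmbedding).injective
  refine ⟨fun w => match w with
    | .inl i => {f i}
    | .inr true => CA
    | .inr false => CB, ?_, ?_, ?_, ?_⟩
  · rintro (i | b)
    · exact ⟨f i, rfl⟩
    · cases b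
      · exact hCB.1
      · exact hCA.1
  · rintro (i | b)
    · haveI : Nonempty ({f i} : Set V) := ⟨⟨f i, rfl⟩⟩
      refine SimpleGraph.Connected.mk (fun a b => ?_)
      obtain ⟨a, ha⟩ := a; obtain ⟨b, hb⟩ := b
      simp only [Set.mem_singleton_iff] at ha hb
      subst ha; subst hb
      exact SimpleGraph.Reachable.refl _
    · cases b
      · exact hCB.2.2.1
      · exact hCA.2.2.1
  · have dSA : ∀ i, Disjoint ({f i} : Set V) CA := fun i =>
      Set.disjoint_singleton_left.mpr (fun h => Set.disjoint_right.mp hCA.2.1 (hfS i) h)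
    have dSB : ∀ i, Disjoint ({f i} : Set V) CB := fun i =>
      Set.disjoint_singleton_left.mpr (fun h => Set.disjoint_right.mp hCB.2.1 (hfS i) h)
    rintro (i | b) (j | c) hne'
    · exact Set.disjoint_singleton.mpr (fun h => hne' (by rw [hfinj h]))
    · cases c
      · exact dSB i
      · exact dSA i
    · cases b
      · exact (dSB j).symm
      · exact (dSA j).symm
    · cases b <;> cases c
      · simp at hne'
      · exact hAB.symm
      · exact hAB
      · simp at hne'
  · have edgeA : ∀ i, ∃ x ∈ ({f i} : Set V), ∃ y ∈ CA, G.Adj x y := by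
      intro i
      obtain ⟨hni, u, hu, hadj⟩ := hattA (hfS i)
      exact ⟨f i, rfl, u, hu, hadj.symm⟩
    have edgeB : ∀ i, ∃ x ∈ ({f i} : Set V), ∃ y ∈ CB, G.Adj x y := by
      intro i
      obtain ⟨hni, u, hu, hadj⟩ := hattB (hfS i)
      exact ⟨f i, rfl, u, hu, hadj.symm⟩
    have noAB : ¬ ∃ x ∈ CA, ∃ y ∈ CB, G.Adj x y := by
      rintro ⟨x, hx, y, hy, hadj⟩
      have hyS : y ∉ S := fun h => Set.disjoint_left.mp hCB.2.1 hy h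
      have : y ∈ CA := hCA.2.2.2 x hx y hadj hyS
      exact Set.disjoint_left.mp hAB this hy
    rintro (i | b) (j | c) hne'
    · have hij : i ≠ j := fun h => hne' (by rw [h])
      constructor
      · intro _; exact hij
      · intro _
        exact ⟨f i, rfl, f j, rfl, hS (hfS i) (hfS j) (fun h => hij (hfinj h))⟩
    · cases c
      · simp only [HGraph, iff_true]
        exact edgeB i
      · simp only [HGraph, iff_true]
        exact edgeA i
    · cases b
      · constructor
        · intro _; trivial
        · intro _
          obtain ⟨x, hx, y, hy, hadj⟩ := edgeB j
          exact ⟨y, hy, x, hx, hadj.symm⟩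
      · constructor
        · intro _; trivial
        · intro _
          obtain ⟨x, hx, y, hy, hadj⟩ := edgeA j
          exact ⟨y, hy, x, hx, hadj.symm⟩
    · cases b <;> cases c
      · simp at hne'
      · constructor
        · rintro ⟨x, hx, y, hy, hadj⟩
          exact absurd ⟨y, hy, x, hx, hadj.symm⟩ noAB
        · intro h; exact absurd h (by simp [HGraph])
      · constructor
        · intro h; exact absurd h noAB
        · intro h; exact absurd h (by simp [HGraph])
      · simp at hne'
end

section
/- Let G be a connected chordal graph with no strict comb of cliques, let K_0 be a maximal clique of G, and suppose G ≠ K_0. Then for every component C of G − K_0 there is a maximal clique K of G containing N(C) ∪ {v} for some vertex v ∈ C. -/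
open SimpleGraph

variable {V W : Type*}

section Helpers
open SimpleGraph Walk
variable {G : SimpleGraph V}

lemma my_length_drop {u v : V} (p : G.Walk u v) (n : ℕ) :
    (p.drop n).length = p.length - n := by
  induction p generalizing n with
  | nil => cases n <;> simp [Walk.drop]
  | cons h q ih =>
    cases n with
    | zero => simp [Walk.drop]
    | succ n => simp [Walk.drop, ih]

lemma my_support_drop_subset {u v : V} (p : G.Walk u v) (n : ℕ) :
    ∀ y ∈ (p.drop n).support, y ∈ p.support := by
  induction p generalizing n with
  | nil => cases n <;> simp [Walk.drop, getVert_of_length_le]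
  | cons h q ih =>
    cases n with
    | zero => simp [Walk.drop]
    | succ n =>
      intro y hy
      simp only [Walk.drop, support_copy] at hy
      simp [support_cons]
      exact Or.inr (ih n y hy)

lemma my_exists_take {u v : V} (p : G.Walk u v) (j : ℕ) (hj : j ≤ p.length) :
    ∃ q : G.Walk u (p.getVert j), q.length = j ∧ ∀ y ∈ q.support, y ∈ p.support := by
  have he : p.reverse.getVert (p.length - j) = p.getVert j := by
    rw [getVert_reverse]; congr 1; omega
  refine ⟨((p.reverse.drop (p.length - j)).reverse).copy rfl he, ?_, ?_⟩
  · rw [length_copy, length_reverse, my_length_drop, length_reverse]; omega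
  · intro y hy
    rw [support_copy, support_reverse, List.mem_reverse] at hy
    have := my_support_drop_subset p.reverse _ y hy
    rwa [support_reverse, List.mem_reverse] at this

lemma my_getVert_mem_support {u v : V} (p : G.Walk u v) (j : ℕ) :
    p.getVert j ∈ p.support := by
  rcases le_or_gt j p.length with h | h
  · exact mem_support_iff_exists_getVert.2 ⟨j, rfl, h⟩
  · rw [getVert_of_length_le _ h.le]; exact end_mem_support p

lemma my_splice {u v : V} (p : G.Walk u v) (a b : ℕ) (hb : b ≤ p.length)
    (h : (a + 1 < b ∧ G.Adj (p.getVert a) (p.getVert b)) ∨ (a < b ∧ p.getVert a = p.getVert b)) :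
    ∃ q : G.Walk u v, q.length < p.length ∧ ∀ y ∈ q.support, y ∈ p.support := by
  obtain ⟨q1, hq1len, hq1sup⟩ := my_exists_take p a (by omega)
  rcases h with ⟨hab, hadj⟩ | ⟨hab, heq⟩
  · refine ⟨q1.append ((p.drop b).cons hadj), ?_, ?_⟩
    · rw [length_append, length_cons, my_length_drop]; omega
    · intro y hy
      rw [mem_support_append_iff] at hy
      rcases hy with hy | hy
      · exact hq1sup y hy
      · rw [support_cons] at hy
        rcases List.mem_cons.mp hy with hy | hy
        · exact hy ▸ my_getVert_mem_support p a
        · exact my_support_drop_subset p b y hy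
  · refine ⟨(q1.copy rfl heq).append (p.drop b), ?_, ?_⟩
    · rw [length_append, length_copy, my_length_drop]; omega
    · intro y hy
      rw [mem_support_append_iff] at hy
      rcases hy with hy | hy
      · rw [support_copy] at hy; exact hq1sup y hy
      · exact my_support_drop_subset p b y hy

lemma my_not_cycle (hch : IsChordal G) (n : ℕ) (hn : 4 ≤ n) (g : ℕ → V)
    (hinj : ∀ a, a < n → ∀ b, b < n → g a = g b → a = b)
    (hadj : ∀ a, a < n → ∀ b, b < n →
      (G.Adj (g a) (g b) ↔ b = a + 1 ∨ a = b + 1 ∨ (a = 0 ∧ b = n - 1) ∨ (b = 0 ∧ a = n - 1))) :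
    False := by
  haveI : NeZero n := ⟨by omega⟩
  haveI : Fact (1 < n) := ⟨by omega⟩
  apply hch n hn (fun x => g x.val)
  · intro i j hij
    exact ZMod.val_injective n (hinj i.val i.val_lt j.val j.val_lt hij)
  · intro i j
    rw [hadj i.val i.val_lt j.val j.val_lt]
    have hi := i.val_lt
    have hj := j.val_lt
    have h1 : j = i + 1 ↔ j.val = (i.val + 1) % n := by
      constructor
      · rintro rfl; rw [ZMod.val_add, ZMod.val_one]
      · intro h
        apply ZMod.val_injective n
        rw [ZMod.val_add, ZMod.val_one, h]
    have h2 : i = j + 1 ↔ i.val = (j.val + 1) % n := by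
      constructor
      · rintro rfl; rw [ZMod.val_add, ZMod.val_one]
      · intro h
        apply ZMod.val_injective n
        rw [ZMod.val_add, ZMod.val_one, h]
    rw [h1, h2]
    rcases Nat.lt_or_ge (i.val + 1) n with h | h
    · rcases Nat.lt_or_ge (j.val + 1) n with h' | h'
      · rw [Nat.mod_eq_of_lt h, Nat.mod_eq_of_lt h']; omega
      · rw [Nat.mod_eq_of_lt h]
        have hj1 : j.val + 1 = n := by omega
        rw [hj1, Nat.mod_self]; omega
    · have hi1 : i.val + 1 = n := by omega
      rw [hi1, Nat.mod_self]
      rcases Nat.lt_or_ge (j.val + 1) n with h' | h'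
      · rw [Nat.mod_eq_of_lt h']; omega
      · have hj1 : j.val + 1 = n := by omega
        rw [hj1, Nat.mod_self]; omega

lemma my_exists_maximal_clique (G : SimpleGraph V) (s : Set V) (hs : G.IsClique s) :
    ∃ K : Set V, Maximal G.IsClique K ∧ s ⊆ K := by
  obtain ⟨m, hsm, hm⟩ := zorn_subset_nonempty {t : Set V | G.IsClique t ∧ s ⊆ t}
    (fun c hcS hchain hcne => by
      obtain ⟨t0, ht0⟩ := hcne
      refine ⟨⋃₀ c, ⟨?_, (hcS ht0).2.trans (Set.subset_sUnion_of_mem ht0)⟩,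
        fun t ht => Set.subset_sUnion_of_mem ht⟩
      intro x hx y hy hne
      obtain ⟨t1, ht1, hx1⟩ := hx
      obtain ⟨t2, ht2, hy2⟩ := hy
      rcases hchain.total ht1 ht2 with h | h
      · exact (hcS ht2).1 (h hx1) hy2 hne
      · exact (hcS ht1).1 hx1 (h hy2) hne)
    s ⟨hs, subset_rfl⟩
  exact ⟨m, ⟨hm.prop.1, fun y hy hxy => hm.2 ⟨hy, hsm.trans hxy⟩ hxy⟩, hsm⟩

lemma my_nbhd_subset {K0 C : Set V} (hC : IsCompOutside G K0 C) : nbhdSet G C ⊆ K0 := by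
  rintro x ⟨hxC, u, huC, hux⟩
  by_contra hxK
  exact hxC (hC.2.2.2 u huC x hux hxK)

lemma claimA {K0 C : Set V} (hch : IsChordal G) (hK0 : G.IsClique K0)
    (hC : IsCompOutside G K0 C) (v : V) (hv : v ∈ C) (s : V) (hs : s ∈ nbhdSet G C) :
    ∃ w ∈ C, G.Adj w s ∧ ∀ t ∈ nbhdSet G C, G.Adj v t → G.Adj w t := by
  classical
  have hNK0 : nbhdSet G C ⊆ K0 := my_nbhd_subset hC
  by_cases hvs : G.Adj v s
  · exact ⟨v, hv, hvs, fun t _ h => h⟩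
  obtain ⟨hsC, u, huC, hus⟩ := hs
  have hreach : ∃ n, ∃ x, ∃ p : G.Walk v x,
      (x ∈ C ∧ G.Adj x s) ∧ (∀ y ∈ p.support, y ∈ C) ∧ p.length = n := by
    obtain ⟨w0⟩ := hC.2.2.1.preconnected ⟨v, hv⟩ ⟨u, huC⟩
    let φ : G.induce C →g G := ⟨Subtype.val, fun {a b} h => h⟩
    refine ⟨_, u, w0.map φ, ⟨huC, hus⟩, ?_, rfl⟩
    intro y hy
    rw [Walk.support_map] at hy
    obtain ⟨z, hz, rfl⟩ := List.mem_map.mp hy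
    exact z.2
  obtain ⟨x, p, ⟨hxC, hxs⟩, hpsup, hplen⟩ := Nat.find_spec hreach
  have hmin : ∀ (q : G.Walk v x) (x' : V) (q' : G.Walk v x'), x' ∈ C → G.Adj x' s →
      (∀ y ∈ q'.support, y ∈ p.support) → q'.length < p.length → False := by
    intro q x' q' hx'C hx's hq'sup hq'len
    exact Nat.find_min hreach (hplen ▸ hq'len)
      ⟨x', q', ⟨hx'C, hx's⟩, fun y hy => hpsup y (hq'sup y hy), rfl⟩
  have hlenpos : 0 < p.length := by
    rcases Nat.eq_zero_or_pos p.length with h0 | h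
    · exfalso
      have hx0 : p.getVert 0 = x := p.getVert_of_length_le (by omega)
      rw [getVert_zero] at hx0
      exact hvs (hx0 ▸ hxs)
    · exact h
  have hFC : ∀ j, p.getVert j ∈ C := fun j => hpsup _ (my_getVert_mem_support p j)
  have hne : ∀ a b, a < b → b ≤ p.length → p.getVert a ≠ p.getVert b := by
    intro a b hab hb heq
    obtain ⟨q, hqlen, hqsup⟩ := my_splice p a b hb (Or.inr ⟨hab, heq⟩)
    exact hmin p x q hxC hxs hqsup hqlen
  have hnoch : ∀ a b, a + 1 < b → b ≤ p.length → ¬ G.Adj (p.getVert a) (p.getVert b) := by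
    intro a b hab hb hadj
    obtain ⟨q, hqlen, hqsup⟩ := my_splice p a b hb (Or.inl ⟨hab, hadj⟩)
    exact hmin p x q hxC hxs hqsup hqlen
  have hF4 : ∀ j, j < p.length → ¬ G.Adj (p.getVert j) s := by
    intro j hj hadj
    obtain ⟨q, hqlen, hqsup⟩ := my_exists_take p j hj.le
    exact hmin p _ q (hFC j) hadj hqsup (by omega)
  refine ⟨x, hxC, hxs, ?_⟩
  intro t ht hvt
  by_contra hxt
  have htC : t ∉ C := ht.1
  have htK0 : t ∈ K0 := hNK0 ht
  have hsK0 : s ∈ K0 := hNK0 ⟨hsC, u, huC, hus⟩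
  have hts : t ≠ s := fun h => hvs (h ▸ hvt)
  have hst : G.Adj s t := hK0 hsK0 htK0 hts.symm
  set i := Nat.findGreatest (fun j => G.Adj t (p.getVert j)) p.length with hidef
  have hi0 : G.Adj t (p.getVert 0) := by rw [getVert_zero]; exact hvt.symm
  have hiadj : G.Adj t (p.getVert i) := by
    have h := Nat.findGreatest_spec (P := fun j => G.Adj t (p.getVert j))
      (Nat.zero_le p.length) hi0
    rw [hidef]; exact h
  have hile : i ≤ p.length := by
    rw [hidef]; exact Nat.findGreatest_le _
  have hilt : i < p.length := by
    rcases lt_or_eq_of_le hile with h | h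
    · exact h
    · exfalso; rw [h, getVert_length] at hiadj; exact hxt hiadj.symm
  have himax : ∀ j, i < j → j ≤ p.length → ¬ G.Adj t (p.getVert j) := by
    intro j h1 h2
    rw [hidef] at h1
    exact Nat.findGreatest_is_greatest (P := fun j => G.Adj t (p.getVert j)) h1 h2
  set m := p.length - i with hmdef
  have hm1 : 1 ≤ m := by omega
  have him : i + m = p.length := by omega
  set n := m + 3 with hndef
  set g : ℕ → V := fun a => if a = 0 then t else if a ≤ m + 1 then p.getVert (i + a - 1) else s
    with hgdef
  have hg0 : g 0 = t := by simp [hgdef]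
  have hgmid : ∀ a, 1 ≤ a → a ≤ m + 1 → g a = p.getVert (i + a - 1) := by
    intro a h1 h2
    simp only [hgdef]
    rw [if_neg (by omega), if_pos h2]
  have hglast : g (m + 2) = s := by
    simp only [hgdef]
    rw [if_neg (by omega), if_neg (by omega)]
  -- injectivity auxiliary
  have auxinj : ∀ a b, a < b → b < n → g a ≠ g b := by
    intro a b hab hb heq
    rcases Nat.eq_zero_or_pos a with ha0 | ha0
    · subst ha0
      rw [hg0] at heq
      rcases Nat.lt_or_ge b (m + 2) with hb' | hb'
      · rw [hgmid b (by omega) (by omega)] at heq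
        exact htC (heq ▸ hFC (i + b - 1))
      · have : b = m + 2 := by omega
        rw [this, hglast] at heq
        exact hts heq
    · rcases Nat.lt_or_ge b (m + 2) with hb' | hb'
      · rw [hgmid a (by omega) (by omega), hgmid b (by omega) (by omega)] at heq
        exact hne (i + a - 1) (i + b - 1) (by omega) (by omega) heq
      · have hbe : b = m + 2 := by omega
        rw [hbe, hglast, hgmid a (by omega) (by omega)] at heq
        exact hsC (heq ▸ hFC (i + a - 1))
  -- adjacency auxiliary (for a < b)
  have auxadj : ∀ a b, a < b → b < n →
      (G.Adj (g a) (g b) ↔ b = a + 1 ∨ a = b + 1 ∨ (a = 0 ∧ b = n - 1) ∨ (b = 0 ∧ a = n - 1)) := by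
    intro a b hab hb
    rcases Nat.eq_zero_or_pos a with ha0 | ha0
    · subst ha0
      rw [hg0]
      rcases Nat.lt_or_ge b (m + 2) with hb' | hb'
      · rw [hgmid b (by omega) (by omega)]
        rcases Nat.eq_or_lt_of_le (show 1 ≤ b by omega) with hb1 | hb1
        · rw [← hb1]
          simp only [show i + 1 - 1 = i from by omega]
          exact iff_of_true hiadj (by tauto)
        · refine iff_of_false (himax (i + b - 1) (by omega) (by omega)) (by omega)
      · have hbe : b = m + 2 := by omega
        subst hbe
        rw [hglast]
        exact iff_of_true hst.symm (by omega)
    · rcases Nat.lt_or_ge b (m + 2) with hb' | hb'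
      · rw [hgmid a (by omega) (by omega), hgmid b (by omega) (by omega)]
        rcases Nat.eq_or_lt_of_le (show a + 1 ≤ b by omega) with hb1 | hb1
        · have hidx : i + b - 1 = (i + a - 1) + 1 := by omega
          rw [hidx]
          exact iff_of_true (p.adj_getVert_succ (by omega)) (by omega)
        · exact iff_of_false (hnoch (i + a - 1) (i + b - 1) (by omega) (by omega)) (by omega)
      · have hbe : b = m + 2 := by omega
        subst hbe
        rw [hglast, hgmid a (by omega) (by omega)]
        rcases Nat.eq_or_lt_of_le (show a ≤ m + 1 by omega) with ha1 | ha1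
        · have hidx : i + a - 1 = p.length := by omega
          rw [hidx, getVert_length]
          exact iff_of_true hxs (by omega)
        · exact iff_of_false (hF4 (i + a - 1) (by omega)) (by omega)
  exact my_not_cycle hch n (by omega) g
    (by
      intro a ha b hb heq
      rcases lt_trichotomy a b with h | h | h
      · exact absurd heq (auxinj a b h hb)
      · exact h
      · exact absurd heq.symm (auxinj b a h ha))
    (by
      intro a ha b hb
      rcases lt_trichotomy a b with h | h | h
      · exact auxadj a b h hb
      · subst h
        exact iff_of_false (G.irrefl) (by omega)
      · rw [adj_comm, auxadj b a h ha]
        constructor <;> (intro hcase; omega))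


end Helpers

universe u

theorem stmt19 {V : Type u} (G : SimpleGraph V) (hconn : G.Connected)
    (hchordal : IsChordal G) (hcomb : ¬ HasStrictCombOfCliques G)
    (K0 : Set V) (hK0 : Maximal G.IsClique K0) (hne : K0 ≠ Set.univ) :
    ∀ C : Set V, IsCompOutside G K0 C →
      ∃ v ∈ C, ∃ K : Set V, Maximal G.IsClique K ∧ nbhdSet G C ∪ {v} ⊆ K := by
  classical
  intro C hC

  have hNK0 : nbhdSet G C ⊆ K0 := my_nbhd_subset hC
  have hmain : ∃ v ∈ C, ∀ s ∈ nbhdSet G C, G.Adj v s := by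
    by_contra hbad
    push_neg at hbad
    apply hcomb
    obtain ⟨v0, hv0⟩ := hC.1
    obtain ⟨s0, hs0N, hs0adj⟩ := hbad v0 hv0
    have hstep : ∀ d : {p : V × V // p.1 ∈ C ∧ p.2 ∈ nbhdSet G C ∧ ¬ G.Adj p.1 p.2},
        ∃ d' : {p : V × V // p.1 ∈ C ∧ p.2 ∈ nbhdSet G C ∧ ¬ G.Adj p.1 p.2},
          G.Adj d'.1.1 d.1.2 ∧ ∀ t ∈ nbhdSet G C, G.Adj d.1.1 t → G.Adj d'.1.1 t := by
      rintro ⟨⟨w, s⟩, hwC, hsN, -⟩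
      obtain ⟨w', hw'C, hw's, hw'mon⟩ := claimA hchordal hK0.1 hC w hwC s hsN
      obtain ⟨s', hs'N, hs'adj⟩ := hbad w' hw'C
      exact ⟨⟨⟨w', s'⟩, hw'C, hs'N, hs'adj⟩, hw's, hw'mon⟩
    choose st hst1 hst2 using hstep
    set F : ℕ → {p : V × V // p.1 ∈ C ∧ p.2 ∈ nbhdSet G C ∧ ¬ G.Adj p.1 p.2} :=
      fun k => st^[k] ⟨⟨v0, s0⟩, hv0, hs0N, hs0adj⟩ with hF
    have hFsucc : ∀ k, F (k + 1) = st (F k) := fun k => Function.iterate_succ_apply' st k _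
    have hwC : ∀ k, (F k).1.1 ∈ C := fun k => (F k).2.1
    have hsN : ∀ k, (F k).1.2 ∈ nbhdSet G C := fun k => (F k).2.2.1
    have hnadj : ∀ k, ¬ G.Adj (F k).1.1 (F k).1.2 := fun k => (F k).2.2.2
    have hadjnext : ∀ k, G.Adj (F (k + 1)).1.1 (F k).1.2 := by
      intro k; rw [hFsucc k]; exact hst1 (F k)
    have hmon : ∀ k l, k ≤ l → ∀ t ∈ nbhdSet G C,
        G.Adj (F k).1.1 t → G.Adj (F l).1.1 t := by
      intro k l hkl
      induction l with
      | zero =>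
        have : k = 0 := by omega
        subst this; exact fun t _ h => h
      | succ l ih =>
        rcases Nat.eq_or_lt_of_le hkl with h | h
        · subst h; exact fun t _ h => h
        · intro t htN hadj
          rw [hFsucc l]
          exact hst2 (F l) t htN (ih (by omega) t htN hadj)
    have hsq_adj : ∀ k l, k < l → G.Adj (F l).1.1 (F k).1.2 :=
      fun k l h => hmon (k + 1) l h _ (hsN k) (hadjnext k)
    have hinj' : ∀ k l, k < l → (F k).1.2 ≠ (F l).1.2 :=
      fun k l h heq => hnadj l (heq ▸ hsq_adj k l h)
    refine ⟨fun k => (F k).1.2, ?_, ?_, ?_⟩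
    · intro k l heq
      by_contra hnekl
      rcases Ne.lt_or_gt hnekl with h | h
      · exact hinj' k l h heq
      · exact hinj' l k h heq.symm
    · intro k l hkl
      have : (F k).1.2 ≠ (F l).1.2 := by
        rcases Ne.lt_or_gt hkl with h | h
        · exact hinj' k l h
        · exact fun heq => hinj' l k h heq.symm
      exact hK0.1 (hNK0 (hsN k)) (hNK0 (hsN l)) this
    · intro i hipos
      refine ⟨(F i).1.1, ?_, ?_⟩
      · intro j hj; exact hsq_adj j i hj
      · intro j hj hadj
        exact hnadj j (hmon i j hj _ (hsN j) hadj)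
  obtain ⟨v, hvC, hvadj⟩ := hmain
  have hclq : G.IsClique (nbhdSet G C ∪ {v}) := by
    rw [Set.union_singleton]
    apply (hK0.1.subset hNK0).insert
    exact fun b hb _ => hvadj b hb
  obtain ⟨K, hKmax, hKsub⟩ := my_exists_maximal_clique G _ hclq
  exact ⟨v, hvC, K, hKmax, hKsub⟩
end
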